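/- Let (E, ρ) be a metric space and S a Lipschitz semiflow with constant L on [0,T]. For every Lipschitz continuous curve ν : [0,T] → E, the estimate ρ(ν_t, S(t;0)ν_0) ≤ L ∫_0^t liminf_{h↓0} ρ(ν_{τ+h}, S(h;τ)ν_τ)/h dτ holds for all t ∈ [0,T], provided the integrand is measurable. -/

import Mathlib

open MeasureTheory Set

lemma my_monotone_integral_deriv_le {m : ℝ → ℝ} (hm : Monotone m) (hc : Continuous m)
    {a b : ℝ} (hab : a ≤ b) :
    ∫ x in Ioc a b, deriv m x ≤ m b - m a := by
  have hst : ∀ x, hm.stieltjesFunction x = m x := by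
    intro x
    rw [hm.stieltjesFunction_eq]
    exact rightLim_eq_of_tendsto
      ((hc.tendsto x).mono_left nhdsWithin_le_nhds)
  have hμ : hm.stieltjesFunction.measure (Ioc a b) = ENNReal.ofReal (m b - m a) := by
    rw [StieltjesFunction.measure_Ioc, hst, hst]
  have hne : hm.stieltjesFunction.measure (Ioc a b) ≠ ⊤ := by
    rw [hμ]; exact ENNReal.ofReal_ne_top
  calc ∫ x in Ioc a b, deriv m x
      = ∫ x in Ioc a b, (hm.stieltjesFunction.measure.rnDeriv volume x).toReal :=
        integral_congr_ae (ae_restrict_of_ae (hm.ae_hasDerivAt.mono fun x hx => hx.deriv))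
    _ ≤ (hm.stieltjesFunction.measure (Ioc a b)).toReal :=
        Measure.setIntegral_toReal_rnDeriv_le hne
    _ = m b - m a := by rw [hμ, ENNReal.toReal_ofReal (sub_nonneg.2 (hm hab))]

theorem semiflow_error_estimate {E : Type*} [MetricSpace E] (T L : ℝ) (hT : 0 < T) (hL : 0 < L)
    (S : ℝ → ℝ → E → E)
    (hS0 : ∀ τ ∈ Icc (0:ℝ) T, ∀ μ : E, S 0 τ μ = μ)
    (hSsemi : ∀ s t τ : ℝ, 0 ≤ s → 0 ≤ t → 0 ≤ τ → τ + s + t ≤ T →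
      ∀ μ : E, S (t + s) τ μ = S t (τ + s) (S s τ μ))
    (hSlip : ∀ s t τ : ℝ, 0 ≤ s → 0 ≤ t → 0 ≤ τ → τ + s ≤ T → τ + t ≤ T →
      ∀ μ ν : E, dist (S t τ μ) (S s τ ν) ≤ L * (dist μ ν + |t - s|))
    (ν : ℝ → E) (Lν : NNReal) (hν : LipschitzOnWith Lν ν (Icc 0 T))
    (f : ℝ → ℝ)
    (hf : ∀ τ ∈ Ico (0:ℝ) T,
      f τ = Filter.liminf (fun h : ℝ => dist (ν (τ + h)) (S h τ (ν τ)) / h)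
              (nhdsWithin 0 (Ioi 0)))
    (hfmeas : Measurable f)
    (hfint : IntervalIntegrable f volume 0 T) :
    ∀ t ∈ Icc (0:ℝ) T, dist (ν t) (S t 0 (ν 0)) ≤ L * ∫ τ in (0:ℝ)..t, f τ := by
  intro t ht
  obtain ⟨ht0, htT⟩ := ht
  rcases eq_or_lt_of_le ht0 with h0t | h0t
  · subst h0t
    rw [intervalIntegral.integral_same, mul_zero, hS0 0 ⟨le_rfl, hT.le⟩, dist_self]
  -- now 0 < t
  set pr : ℝ → ℝ := fun x => max 0 (min x t) with hprdef
  have hpr_mem : ∀ x, pr x ∈ Icc 0 t := fun x =>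
    ⟨le_max_left _ _, max_le h0t.le (min_le_right x t)⟩
  have hpr_id : ∀ x, 0 ≤ x → x ≤ t → pr x = x := by
    intro x h1 h2
    simp only [hprdef, min_eq_left h2, max_eq_right h1]
  set g : ℝ → ℝ := fun τ => dist (ν t) (S (t - pr τ) (pr τ) (ν (pr τ))) with hgdef
  -- semigroup rewriting
  have hsemi : ∀ σ τ, 0 ≤ σ → σ ≤ τ → τ ≤ t →
      S (t - σ) σ (ν σ) = S (t - τ) τ (S (τ - σ) σ (ν σ)) := by
    intro σ τ h0σ hστ hτt
    have h := hSsemi (τ - σ) (t - τ) σ (by linarith) (by linarith) h0σ (by linarith) (ν σ)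
    rw [show (t - τ) + (τ - σ) = t - σ by ring, show σ + (τ - σ) = τ by ring] at h
    exact h
  -- key inequality
  have key : ∀ σ τ, 0 ≤ σ → σ ≤ τ → τ ≤ t →
      g σ ≤ g τ + L * dist (ν τ) (S (τ - σ) σ (ν σ)) := by
    intro σ τ h0σ hστ hτt
    have e1 : pr σ = σ := hpr_id σ h0σ (le_trans hστ hτt)
    have e2 : pr τ = τ := hpr_id τ (le_trans h0σ hστ) hτt
    simp only [hgdef, e1, e2]
    have h2 := hSlip (t - τ) (t - τ) τ (by linarith) (by linarith) (le_trans h0σ hστ)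
      (by linarith) (by linarith) (ν τ) (S (τ - σ) σ (ν σ))
    rw [sub_self, abs_zero, add_zero] at h2
    calc dist (ν t) (S (t - σ) σ (ν σ))
        ≤ dist (ν t) (S (t - τ) τ (ν τ)) + dist (S (t - τ) τ (ν τ)) (S (t - σ) σ (ν σ)) :=
          dist_triangle _ _ _
      _ ≤ dist (ν t) (S (t - τ) τ (ν τ)) + L * dist (ν τ) (S (τ - σ) σ (ν σ)) := by
          rw [hsemi σ τ h0σ hστ hτt]; linarith
  -- step estimate
  have hstep : ∀ σ τ, 0 ≤ σ → σ ≤ τ → τ ≤ t →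
      dist (ν τ) (S (τ - σ) σ (ν σ)) ≤ ((Lν : ℝ) + L) * (τ - σ) := by
    intro σ τ h0σ hστ hτt
    have hσT : σ ∈ Icc (0:ℝ) T := ⟨h0σ, by linarith⟩
    have hτT : τ ∈ Icc (0:ℝ) T := ⟨le_trans h0σ hστ, by linarith⟩
    have h1 : dist (ν τ) (ν σ) ≤ (Lν : ℝ) * (τ - σ) := by
      have := hν.dist_le_mul τ hτT σ hσT
      rw [Real.dist_eq, abs_of_nonneg (by linarith)] at this
      exact this
    have h2 : dist (ν σ) (S (τ - σ) σ (ν σ)) ≤ L * (τ - σ) := by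
      have h3 := hSlip (τ - σ) 0 σ (by linarith) le_rfl h0σ (by linarith) (by linarith)
        (ν σ) (ν σ)
      rw [hS0 σ hσT, dist_self, zero_add, zero_sub, abs_neg, abs_of_nonneg (by linarith)] at h3
      exact h3
    calc dist (ν τ) (S (τ - σ) σ (ν σ))
        ≤ dist (ν τ) (ν σ) + dist (ν σ) (S (τ - σ) σ (ν σ)) := dist_triangle _ _ _
      _ ≤ (Lν : ℝ) * (τ - σ) + L * (τ - σ) := add_le_add h1 h2
      _ = ((Lν : ℝ) + L) * (τ - σ) := by ring
  set K : ℝ := L * ((Lν : ℝ) + L) with hKdef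
  have hK0 : 0 ≤ K := by positivity
  -- local Lipschitz bound for g on [0, t]
  have hlips : ∀ σ τ, 0 ≤ σ → σ ≤ τ → τ ≤ t → |g τ - g σ| ≤ K * (τ - σ) := by
    intro σ τ h0σ hστ hτt
    have e1 : pr σ = σ := hpr_id σ h0σ (le_trans hστ hτt)
    have e2 : pr τ = τ := hpr_id τ (le_trans h0σ hστ) hτt
    have hd : dist (S (t - τ) τ (ν τ)) (S (t - σ) σ (ν σ)) ≤ K * (τ - σ) := by
      rw [hsemi σ τ h0σ hστ hτt]
      have h2 := hSlip (t - τ) (t - τ) τ (by linarith) (by linarith) (le_trans h0σ hστ)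
        (by linarith) (by linarith) (ν τ) (S (τ - σ) σ (ν σ))
      rw [sub_self, abs_zero, add_zero] at h2
      have h3 := hstep σ τ h0σ hστ hτt
      calc dist (S (t - τ) τ (ν τ)) (S (t - τ) τ (S (τ - σ) σ (ν σ)))
          ≤ L * dist (ν τ) (S (τ - σ) σ (ν σ)) := h2
        _ ≤ L * (((Lν : ℝ) + L) * (τ - σ)) := by
            exact mul_le_mul_of_nonneg_left h3 hL.le
        _ = K * (τ - σ) := by rw [hKdef]; ring
    have habs : |g τ - g σ| ≤ dist (S (t - τ) τ (ν τ)) (S (t - σ) σ (ν σ)) := by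
      simp only [hgdef, e1, e2]
      rw [dist_comm (ν t) (S (t - τ) τ (ν τ)), dist_comm (ν t) (S (t - σ) σ (ν σ))]
      exact abs_dist_sub_le _ _ _
    exact le_trans habs hd
  -- global Lipschitz
  have hglip : LipschitzWith (Real.toNNReal K) g := by
    apply LipschitzWith.of_dist_le_mul
    intro x y
    have hprlip : ∀ a b : ℝ, |pr a - pr b| ≤ |a - b| := by
      intro a b
      simp only [hprdef]
      calc |max 0 (min a t) - max 0 (min b t)| ≤ max |0 - 0| |min a t - min b t| :=
            abs_max_sub_max_le_max _ _ _ _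
        _ ≤ |a - b| := by
            rw [sub_self, abs_zero]
            refine max_le (abs_nonneg _) ?_
            calc |min a t - min b t| ≤ max |a - b| |t - t| := abs_min_sub_min_le_max _ _ _ _
              _ ≤ |a - b| := by rw [sub_self, abs_zero]; exact max_le le_rfl (abs_nonneg _)
    have hgg : ∀ a b : ℝ, pr a ≤ pr b → |g b - g a| ≤ K * |a - b| := by
      intro a b hab
      have h1 := hlips (pr a) (pr b) (hpr_mem a).1 hab (hpr_mem b).2
      have e1 : g (pr a) = g a := by
        simp only [hgdef]
        rw [hpr_id (pr a) (hpr_mem a).1 (hpr_mem a).2]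
      have e2 : g (pr b) = g b := by
        simp only [hgdef]
        rw [hpr_id (pr b) (hpr_mem b).1 (hpr_mem b).2]
      rw [e1, e2] at h1
      have h2 : pr b - pr a ≤ |a - b| := by
        calc pr b - pr a ≤ |pr b - pr a| := le_abs_self _
          _ ≤ |a - b| := by rw [abs_sub_comm (pr b) (pr a)]
                            exact hprlip a b
      exact le_trans h1 (mul_le_mul_of_nonneg_left h2 hK0)
    rw [Real.dist_eq, Real.dist_eq, Real.coe_toNNReal K hK0]
    rcases le_total (pr x) (pr y) with h | h
    · rw [abs_sub_comm]
      exact hgg x y h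
    · rw [abs_sub_comm x y]
      exact hgg y x h
  -- Rademacher
  have hderiv_ae : ∀ᵐ τ, DifferentiableAt ℝ g τ := hglip.ae_differentiableAt
  -- derivative bound
  have hderiv_bound : ∀ x, |deriv g x| ≤ K := by
    intro x
    by_cases hx : DifferentiableAt ℝ g x
    · have := hx.hasDerivAt.le_of_lipschitz hglip
      rwa [Real.norm_eq_abs, Real.coe_toNNReal K hK0] at this
    · rw [deriv_zero_of_not_differentiableAt hx, abs_zero]; exact hK0
  -- monotone function m
  set m : ℝ → ℝ := fun τ => K * τ + g τ with hmdef
  have hm : Monotone m := by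
    intro a b hab
    have := hglip.dist_le_mul a b
    rw [Real.dist_eq, Real.dist_eq, Real.coe_toNNReal K hK0] at this
    have h1 : g a - g b ≤ K * (b - a) := by
      have h2 : |g a - g b| ≤ K * |a - b| := this
      have h3 : |a - b| = b - a := by rw [abs_sub_comm, abs_of_nonneg (by linarith)]
      calc g a - g b ≤ |g a - g b| := le_abs_self _
        _ ≤ K * (b - a) := by rw [← h3]; exact h2
    simp only [hmdef]
    nlinarith
  have hmc : Continuous m :=
    (continuous_const.mul continuous_id).add hglip.continuous
  -- integrability of deriv g
  have hint_deriv : IntegrableOn (deriv g) (Ioc 0 t) := by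
    refine Integrable.mono' (g := fun _ => K) (integrableOn_const (ne_of_lt ?_)) ?_ ?_
    · rw [Real.volume_Ioc]; exact ENNReal.ofReal_lt_top
    · exact (measurable_deriv g).aestronglyMeasurable
    · exact Filter.Eventually.of_forall fun x => by
        rw [Real.norm_eq_abs]; exact hderiv_bound x
  -- FTC inequality
  have hFTC : ∫ x in Ioc 0 t, deriv m x ≤ m t - m 0 := my_monotone_integral_deriv_le hm hmc h0t.le
  have hderiv_m : ∀ᵐ x, deriv m x = K + deriv g x := by
    filter_upwards [hderiv_ae] with x hx
    have : HasDerivAt m (K * 1 + deriv g x) x :=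
      ((hasDerivAt_id x).const_mul K).add hx.hasDerivAt
    rw [this.deriv, mul_one]
  have hIm : ∫ x in Ioc 0 t, deriv m x = K * t + ∫ x in Ioc 0 t, deriv g x := by
    rw [integral_congr_ae (ae_restrict_of_ae hderiv_m),
      integral_add (integrableOn_const (C := K) (s := Ioc 0 t) (μ := volume) (ne_of_lt (by rw [Real.volume_Ioc]; exact ENNReal.ofReal_lt_top))) hint_deriv,
      setIntegral_const, Real.volume_real_Ioc_of_le h0t.le, sub_zero, smul_eq_mul]
    ring
  have hIg : ∫ x in Ioc 0 t, deriv g x ≤ g t - g 0 := by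
    have : m t - m 0 = K * t + (g t - g 0) := by simp only [hmdef]; ring
    rw [hIm, this] at hFTC
    linarith
  -- almost everywhere bound -deriv g ≤ L * f
  have hne : ∀ᵐ τ : ℝ, τ ≠ t := by
    rw [ae_iff]
    have : {τ : ℝ | ¬τ ≠ t} = {t} := by ext τ; simp
    rw [this, Real.volume_singleton]
  have hbound : ∀ᵐ τ ∂(volume.restrict (Ioc 0 t)), -deriv g τ ≤ L * f τ := by
    filter_upwards [ae_restrict_of_ae hderiv_ae, ae_restrict_of_ae hne,
      ae_restrict_mem measurableSet_Ioc] with τ hdiff hne' hmem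
    have hτ0 : 0 < τ := hmem.1
    have hτt : τ < t := lt_of_le_of_ne hmem.2 hne'
    -- slope limit along the right
    have hslope : Filter.Tendsto (fun h : ℝ => (g (τ + h) - g τ) / h)
        (nhdsWithin 0 (Ioi 0)) (nhds (deriv g τ)) := by
      have h1 := hasDerivAt_iff_tendsto_slope.1 hdiff.hasDerivAt
      have h2 : Filter.Tendsto (fun h : ℝ => τ + h) (nhdsWithin 0 (Ioi 0))
          (nhdsWithin τ {τ}ᶜ) := by
        apply tendsto_nhdsWithin_of_tendsto_nhds_of_eventually_within
        · have : Filter.Tendsto (fun h : ℝ => τ + h) (nhds 0) (nhds (τ + 0)) :=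
            tendsto_const_nhds.add Filter.tendsto_id
          rw [add_zero] at this
          exact this.mono_left nhdsWithin_le_nhds
        · filter_upwards [self_mem_nhdsWithin] with h hh
          simp only [mem_compl_iff, mem_singleton_iff]
          have : (0:ℝ) < h := hh
          intro hc
          linarith [hc ▸ (by linarith : τ + h > τ)]
      have h3 := h1.comp h2
      have : (fun h : ℝ => (g (τ + h) - g τ) / h) = (slope g τ) ∘ (fun h : ℝ => τ + h) := by
        funext h
        simp only [Function.comp_apply, slope_def_field, add_sub_cancel_left]
      rw [this]
      exact h3
    set q : ℝ → ℝ := fun h => dist (ν (τ + h)) (S h τ (ν τ)) / h with hqdef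
    set r : ℝ → ℝ := fun h => ((g τ - g (τ + h)) / h) / L with hrdef
    have hr : Filter.Tendsto r (nhdsWithin 0 (Ioi 0)) (nhds (-(deriv g τ) / L)) := by
      have h4 := (hslope.neg).div_const L
      exact h4.congr fun h => by simp only [hrdef]; ring
    have hqr : ∀ᶠ h in nhdsWithin 0 (Ioi 0), r h ≤ q h := by
      filter_upwards [Ioo_mem_nhdsGT_of_mem ⟨le_rfl, sub_pos.2 hτt⟩] with h hh
      have h0 : 0 < h := hh.1
      have hkey := key τ (τ + h) hτ0.le (by linarith) (by linarith [hh.2])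
      rw [show τ + h - τ = h by ring] at hkey
      have hd : g τ - g (τ + h) ≤ L * dist (ν (τ + h)) (S h τ (ν τ)) := by linarith
      simp only [hrdef, hqdef]
      rw [div_div, div_le_div_iff₀ (by positivity) h0]
      nlinarith [mul_le_mul_of_nonneg_right hd h0.le,
        dist_nonneg (x := ν (τ + h)) (y := S h τ (ν τ))]
    have hfτ : f τ = Filter.liminf q (nhdsWithin 0 (Ioi 0)) :=
      hf τ ⟨hτ0.le, by linarith⟩
    have hub : ∀ᶠ h in nhdsWithin (0:ℝ) (Ioi 0), q h ≤ (Lν : ℝ) + L := by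
      filter_upwards [Ioo_mem_nhdsGT_of_mem ⟨le_rfl, sub_pos.2 hτt⟩] with h hh
      have h0 : 0 < h := hh.1
      have h5 := hstep τ (τ + h) hτ0.le (by linarith) (by linarith [hh.2])
      rw [show τ + h - τ = h by ring] at h5
      simp only [hqdef]
      rw [div_le_iff₀ h0]
      linarith
    have hcob : Filter.IsCoboundedUnder (· ≥ ·) (nhdsWithin (0:ℝ) (Ioi 0)) q :=
      Filter.isCoboundedUnder_ge_of_eventually_le _ hub
    have hliminf : -(deriv g τ) / L ≤ Filter.liminf q (nhdsWithin 0 (Ioi 0)) := by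
      rw [← hr.liminf_eq]
      exact Filter.liminf_le_liminf hqr hr.isBoundedUnder_ge hcob
    rw [← hfτ] at hliminf
    rw [div_le_iff₀ hL] at hliminf
    nlinarith
  -- integrability of f
  have hint_f : IntegrableOn f (Ioc 0 t) := by
    have h1 : IntervalIntegrable f volume 0 t := by
      apply hfint.mono_set
      rw [uIcc_of_le h0t.le, uIcc_of_le (by linarith : (0:ℝ) ≤ T)]
      exact Icc_subset_Icc le_rfl htT
    rwa [intervalIntegrable_iff_integrableOn_Ioc_of_le h0t.le] at h1
  have hmono2 : ∫ τ in Ioc 0 t, -deriv g τ ≤ ∫ τ in Ioc 0 t, L * f τ :=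
    integral_mono_ae hint_deriv.neg (hint_f.const_mul L) hbound
  -- conclusion
  have hgt : g t = 0 := by
    simp only [hgdef]
    rw [hpr_id t h0t.le le_rfl, sub_self, hS0 t ⟨h0t.le, htT⟩, dist_self]
  have hg0 : g 0 = dist (ν t) (S t 0 (ν 0)) := by
    simp only [hgdef]
    rw [hpr_id 0 le_rfl h0t.le, sub_zero]
  rw [intervalIntegral.integral_of_le h0t.le]
  have hconst : ∫ τ in Ioc 0 t, L * f τ = L * ∫ τ in Ioc 0 t, f τ := integral_const_mul _ _
  have hneg : ∫ τ in Ioc 0 t, -deriv g τ = -∫ τ in Ioc 0 t, deriv g τ := integral_neg _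
  rw [← hg0]
  linarith [hIg, hmono2]
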